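/- Let 𝒳 = 𝒴 = {0,1,2}, let ℰ = {{0,1},{1,2},{0,2}}, let 𝒢 = (𝒳,ℰ), and let (X,Y) be jointly distributed with P_{XY}(x,y) = 1/6 for all (x,y) with x ≠ y and P_{XY}(x,x) = 0. Then the conditional hypergraph entropy satisfies H_𝒢(X|Y) = 1/2; moreover the minimum is attained by the test channel P_{W|X}(w|x) = 1/2 for each of the two hyperedges w ∈ ℰ containing x. -/

import Mathlib

/-!
STATEMENT 19: For 𝒳 = 𝒴 = {0,1,2}, ℰ = {{0,1},{1,2},{0,2}} and
`P_{XY}(x,y) = 1/6` for `x ≠ y` (and `0` for `x = y`), the conditional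
hypergraph entropy is `H_𝒢(X|Y) = 1/2`, and the minimum is attained by the test
channel `P_{W|X}(w|x) = 1/2` for each of the two hyperedges `w ∈ ℰ` containing
`x`.
-/

open Finset

attribute [local instance] Classical.propDecidable

namespace Stmt19

/-- The conditional mutual information `I(W ∧ X | Y)` (base-2), where the joint
distribution of `(W, X, Y)` is `P(w,x,y) = t(w|x) P_{XY}(x,y)` (so that
`W −∘− X −∘− Y` is a Markov chain with test channel `t`). -/
noncomputable def condMI {X Y : Type} [Fintype X] [Fintype Y]
    (P : X → Y → ℝ) (t : X → Finset X → ℝ) : ℝ :=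
  ∑ w : Finset X, ∑ x : X, ∑ y : Y,
    t x w * P x y *
      Real.logb 2 ((t x w * P x y) * (∑ x' : X, P x' y)
        / ((∑ x' : X, t x' w * P x' y) * P x y))

/-- The conditional hypergraph entropy `H_𝒢(X|Y)` with hyperedge set `E`. -/
noncomputable def hypEnt {X Y : Type} [Fintype X] [Fintype Y]
    (P : X → Y → ℝ) (E : Set (Finset X)) : ℝ :=
  sInf {r | ∃ t : X → Finset X → ℝ,
    (∀ x w, 0 ≤ t x w) ∧ (∀ x, ∑ w : Finset X, t x w = 1) ∧
    (∀ x w, t x w ≠ 0 → w ∈ E ∧ x ∈ w) ∧ r = condMI P t}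

/-- The joint distribution: uniform on the pairs `(x,y)` with `x ≠ y`. -/
noncomputable def P19 : Fin 3 → Fin 3 → ℝ :=
  fun x y => if x = y then 0 else 1 / 6

/-- The hyperedge set `ℰ = {{0,1},{1,2},{0,2}}`. -/
def E19 : Set (Finset (Fin 3)) :=
  {({0, 1} : Finset (Fin 3)), ({1, 2} : Finset (Fin 3)), ({0, 2} : Finset (Fin 3))}

/-- The test channel `P_{W|X}(w|x) = 1/2` for each of the two hyperedges
`w ∈ ℰ` containing `x`. -/
noncomputable def t19 : Fin 3 → Finset (Fin 3) → ℝ :=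
  fun x w => if w ∈ E19 ∧ x ∈ w then 1 / 2 else 0

lemma key_ineq (a b : ℝ) (ha : 0 ≤ a) (hb : 0 ≤ b) :
    0 ≤ a * Real.logb 2 (2*a/(a+b)) + b * Real.logb 2 (2*b/(a+b)) := by
  rcases eq_or_lt_of_le ha with h | ha'
  · rcases eq_or_lt_of_le hb with h2 | hb'
    · simp [← h, ← h2]
    · have h3 : (2*b/(0+b)) = 2 := by field_simp; ring
      rw [← h, h3, Real.logb_self_eq_one one_lt_two]
      simp; positivity
  · rcases eq_or_lt_of_le hb with h2 | hb'
    · have h3 : (2*a/(a+0)) = 2 := by field_simp; ring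
      rw [← h2, h3, Real.logb_self_eq_one one_lt_two]
      simp; positivity
    · have hs : 0 < a + b := by linarith
      have hlog : 0 < Real.log 2 := Real.log_pos one_lt_two
      have kA : a - (a+b)/2 ≤ a * Real.log (2*a/(a+b)) := by
        have h1 : Real.log ((a+b)/(2*a)) ≤ (a+b)/(2*a) - 1 :=
          Real.log_le_sub_one_of_pos (by positivity)
        have h2 : Real.log (2*a/(a+b)) = - Real.log ((a+b)/(2*a)) := by
          rw [← Real.log_inv]; congr 1; field_simp
        have h4 : a * Real.log ((a+b)/(2*a)) ≤ a * ((a+b)/(2*a) - 1) :=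
          mul_le_mul_of_nonneg_left h1 ha
        have h5 : a * ((a+b)/(2*a) - 1) = (a+b)/2 - a := by field_simp
        rw [h2]; nlinarith
      have kB : b - (a+b)/2 ≤ b * Real.log (2*b/(a+b)) := by
        have h1 : Real.log ((a+b)/(2*b)) ≤ (a+b)/(2*b) - 1 :=
          Real.log_le_sub_one_of_pos (by positivity)
        have h2 : Real.log (2*b/(a+b)) = - Real.log ((a+b)/(2*b)) := by
          rw [← Real.log_inv]; congr 1; field_simp
        have h4 : b * Real.log ((a+b)/(2*b)) ≤ b * ((a+b)/(2*b) - 1) :=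
          mul_le_mul_of_nonneg_left h1 hb
        have h5 : b * ((a+b)/(2*b) - 1) = (a+b)/2 - b := by field_simp
        rw [h2]; nlinarith
      have hAB : 0 ≤ a * Real.log (2*a/(a+b)) + b * Real.log (2*b/(a+b)) := by linarith
      have e : ∀ x : ℝ, Real.logb 2 x = Real.log x / Real.log 2 := fun x => rfl
      rw [e, e, mul_div_assoc', mul_div_assoc', ← add_div]
      exact div_nonneg hAB hlog.le

lemma sum_w (g : Finset (Fin 3) → ℝ)
    (h : ∀ w, w ≠ {0,1} → w ≠ {1,2} → w ≠ {0,2} → g w = 0) :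
    ∑ w : Finset (Fin 3), g w = g {0,1} + g {1,2} + g {0,2} := by
  classical
  rw [← Finset.sum_subset (Finset.subset_univ
      ({({0,1} : Finset (Fin 3)), {1,2}, {0,2}} : Finset (Finset (Fin 3)))) (by
    intro w _ hw
    simp only [Finset.mem_insert, Finset.mem_singleton] at hw
    push_neg at hw
    exact h w hw.1 hw.2.1 hw.2.2)]
  rw [Finset.sum_insert (by decide), Finset.sum_insert (by decide), Finset.sum_singleton]
  ring

lemma mem_E19_iff (w : Finset (Fin 3)) :
    w ∈ E19 ↔ (w = {0,1} ∨ w = {1,2} ∨ w = {0,2}) := by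
  simp [E19]

lemma t19_eq (x : Fin 3) (w : Finset (Fin 3)) :
    t19 x w = if (w = {0,1} ∨ w = {1,2} ∨ w = {0,2}) ∧ x ∈ w then 1/2 else 0 := by
  unfold t19 E19
  congr 1

lemma abstract_bound (α β : ℝ) (hα : 0 ≤ α) (hβ : 0 ≤ β) :
    (α+β)/6 ≤ α*(1/6)*Real.logb 2 (α*(1/6)*(1/3)/(α*(1/6)*(1/6)))
      + α*(1/6)*Real.logb 2 (α*(1/6)*(1/3)/((α*(1/6)+β*(1/6))*(1/6)))
      + β*(1/6)*Real.logb 2 (β*(1/6)*(1/3)/(β*(1/6)*(1/6)))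
      + β*(1/6)*Real.logb 2 (β*(1/6)*(1/3)/((α*(1/6)+β*(1/6))*(1/6))) := by
  rcases eq_or_lt_of_le hα with h | hα'
  · rcases eq_or_lt_of_le hβ with h2 | hβ'
    · simp [← h, ← h2]
    · rw [← h]
      rw [show (β*(1/6)*(1/3)/(β*(1/6)*(1/6)) : ℝ) = 2 from by
        rw [div_eq_iff (by positivity)]; ring]
      rw [show (β*(1/6)*(1/3)/((0*(1/6)+β*(1/6))*(1/6)) : ℝ) = 2 from by
        rw [div_eq_iff (by positivity)]; ring]
      rw [Real.logb_self_eq_one one_lt_two]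
      simp; linarith
  · rcases eq_or_lt_of_le hβ with h2 | hβ'
    · rw [← h2]
      rw [show (α*(1/6)*(1/3)/(α*(1/6)*(1/6)) : ℝ) = 2 from by
        rw [div_eq_iff (by positivity)]; ring]
      rw [show (α*(1/6)*(1/3)/((α*(1/6)+0*(1/6))*(1/6)) : ℝ) = 2 from by
        rw [div_eq_iff (by positivity)]; ring]
      rw [Real.logb_self_eq_one one_lt_two]
      simp; linarith
    · have hσ : (0:ℝ) < α + β := by linarith
      rw [show (α*(1/6)*(1/3)/(α*(1/6)*(1/6)) : ℝ) = 2 from by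
          rw [div_eq_iff (by positivity)]; ring]
      rw [show (β*(1/6)*(1/3)/(β*(1/6)*(1/6)) : ℝ) = 2 from by
          rw [div_eq_iff (by positivity)]; ring]
      rw [show (α*(1/6)*(1/3)/((α*(1/6)+β*(1/6))*(1/6)) : ℝ) = 2*α/(α+β) from by
          rw [div_eq_div_iff (by positivity) (by positivity)]; ring]
      rw [show (β*(1/6)*(1/3)/((α*(1/6)+β*(1/6))*(1/6)) : ℝ) = 2*β/(α+β) from by
          rw [div_eq_div_iff (by positivity) (by positivity)]; ring]
      rw [Real.logb_self_eq_one one_lt_two]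
      have := key_ineq α β hα hβ
      linarith

lemma edge01_bound (t : Fin 3 → Finset (Fin 3) → ℝ) (h0 : ∀ x w, 0 ≤ t x w)
    (hz : t 2 {0,1} = 0) :
    (t 0 {0,1} + t 1 {0,1})/6 ≤ ∑ x : Fin 3, ∑ y : Fin 3,
      t x ({0,1}) * P19 x y *
        Real.logb 2 ((t x ({0,1}) * P19 x y) * (∑ x' : Fin 3, P19 x' y)
          / ((∑ x' : Fin 3, t x' ({0,1}) * P19 x' y) * P19 x y)) := by
  simp only [Fin.sum_univ_three]
  norm_num [P19, Fin.ext_iff, hz]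
  linarith [abstract_bound (t 0 {0,1}) (t 1 {0,1}) (h0 0 _) (h0 1 _)]

lemma edge12_bound (t : Fin 3 → Finset (Fin 3) → ℝ) (h0 : ∀ x w, 0 ≤ t x w)
    (hz : t 0 {1,2} = 0) :
    (t 1 {1,2} + t 2 {1,2})/6 ≤ ∑ x : Fin 3, ∑ y : Fin 3,
      t x ({1,2}) * P19 x y *
        Real.logb 2 ((t x ({1,2}) * P19 x y) * (∑ x' : Fin 3, P19 x' y)
          / ((∑ x' : Fin 3, t x' ({1,2}) * P19 x' y) * P19 x y)) := by
  simp only [Fin.sum_univ_three]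
  norm_num [P19, Fin.ext_iff, hz]
  linarith [abstract_bound (t 1 {1,2}) (t 2 {1,2}) (h0 1 _) (h0 2 _)]

lemma edge02_bound (t : Fin 3 → Finset (Fin 3) → ℝ) (h0 : ∀ x w, 0 ≤ t x w)
    (hz : t 1 {0,2} = 0) :
    (t 0 {0,2} + t 2 {0,2})/6 ≤ ∑ x : Fin 3, ∑ y : Fin 3,
      t x ({0,2}) * P19 x y *
        Real.logb 2 ((t x ({0,2}) * P19 x y) * (∑ x' : Fin 3, P19 x' y)
          / ((∑ x' : Fin 3, t x' ({0,2}) * P19 x' y) * P19 x y)) := by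
  simp only [Fin.sum_univ_three]
  norm_num [P19, Fin.ext_iff, hz]
  linarith [abstract_bound (t 0 {0,2}) (t 2 {0,2}) (h0 0 _) (h0 2 _)]

lemma condMI_t19 : condMI P19 t19 = 1/2 := by
  unfold condMI
  rw [sum_w _ (by
    intro w h1 h2 h3
    have hz : ∀ x : Fin 3, t19 x w = 0 := by
      intro x; rw [t19_eq]; simp [h1, h2, h3]
    simp [hz])]
  simp only [Fin.sum_univ_three, t19_eq, P19]
  norm_num [Finset.mem_insert, Finset.mem_singleton, Fin.ext_iff, Real.logb_self_eq_one]

lemma t19_props : (∀ x w, 0 ≤ t19 x w) ∧ (∀ x, ∑ w : Finset (Fin 3), t19 x w = 1) ∧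
    (∀ x w, t19 x w ≠ 0 → w ∈ E19 ∧ x ∈ w) := by
  refine ⟨fun x w => ?_, fun x => ?_, fun x w h => ?_⟩
  · rw [t19_eq]; split <;> norm_num
  · rw [sum_w _ (fun w h1 h2 h3 => by rw [t19_eq]; simp [h1, h2, h3])]
    fin_cases x <;> norm_num [t19_eq, Fin.ext_iff, Finset.mem_insert, Finset.mem_singleton]
  · rw [t19] at h
    split_ifs at h with hc
    · exact hc
    · exact absurd rfl h

lemma lower_bound (t : Fin 3 → Finset (Fin 3) → ℝ) (h0 : ∀ x w, 0 ≤ t x w)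
    (h1 : ∀ x, ∑ w : Finset (Fin 3), t x w = 1)
    (hs : ∀ x w, t x w ≠ 0 → w ∈ E19 ∧ x ∈ w) :
    1/2 ≤ condMI P19 t := by
  have hzoff : ∀ (x : Fin 3) (w : Finset (Fin 3)),
      w ≠ {0,1} → w ≠ {1,2} → w ≠ {0,2} → t x w = 0 := by
    intro x w a1 a2 a3
    by_contra h
    rcases (mem_E19_iff w).mp (hs x w h).1 with h' | h' | h' <;> simp_all
  have hznm : ∀ (x : Fin 3) (w : Finset (Fin 3)), x ∉ w → t x w = 0 := by
    intro x w hx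
    by_contra h
    exact hx (hs x w h).2
  have z1 : t 2 {0,1} = 0 := hznm 2 _ (by decide)
  have z2 : t 0 {1,2} = 0 := hznm 0 _ (by decide)
  have z3 : t 1 {0,2} = 0 := hznm 1 _ (by decide)
  have s0 : t 0 {0,1} + t 0 {1,2} + t 0 {0,2} = 1 := by
    rw [← sum_w (t 0) (hzoff 0)]; exact h1 0
  have s1 : t 1 {0,1} + t 1 {1,2} + t 1 {0,2} = 1 := by
    rw [← sum_w (t 1) (hzoff 1)]; exact h1 1
  have s2 : t 2 {0,1} + t 2 {1,2} + t 2 {0,2} = 1 := by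
    rw [← sum_w (t 2) (hzoff 2)]; exact h1 2
  unfold condMI
  rw [sum_w _ (by
    intro w a1 a2 a3
    apply Finset.sum_eq_zero
    intro x _
    apply Finset.sum_eq_zero
    intro y _
    rw [hzoff x w a1 a2 a3]
    ring_nf)]
  have b1 := edge01_bound t h0 z1
  have b2 := edge12_bound t h0 z2
  have b3 := edge02_bound t h0 z3
  linarith

theorem hypergraph_entropy_example :
    hypEnt P19 E19 = 1 / 2 ∧
    ((∀ x w, 0 ≤ t19 x w) ∧ (∀ x, ∑ w : Finset (Fin 3), t19 x w = 1) ∧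
      (∀ x w, t19 x w ≠ 0 → w ∈ E19 ∧ x ∈ w)) ∧
    condMI P19 t19 = 1 / 2 := by
  obtain ⟨p1, p2, p3⟩ := t19_props
  refine ⟨?_, ⟨p1, p2, p3⟩, condMI_t19⟩
  unfold hypEnt
  have hmem : (1/2 : ℝ) ∈ {r | ∃ t : Fin 3 → Finset (Fin 3) → ℝ,
      (∀ x w, 0 ≤ t x w) ∧ (∀ x, ∑ w : Finset (Fin 3), t x w = 1) ∧
      (∀ x w, t x w ≠ 0 → w ∈ E19 ∧ x ∈ w) ∧ r = condMI P19 t} :=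
    ⟨t19, p1, p2, p3, condMI_t19.symm⟩
  have hlb : ∀ r ∈ {r | ∃ t : Fin 3 → Finset (Fin 3) → ℝ,
      (∀ x w, 0 ≤ t x w) ∧ (∀ x, ∑ w : Finset (Fin 3), t x w = 1) ∧
      (∀ x w, t x w ≠ 0 → w ∈ E19 ∧ x ∈ w) ∧ r = condMI P19 t}, (1/2 : ℝ) ≤ r := by
    rintro r ⟨t, h0, h1, hs, rfl⟩
    exact lower_bound t h0 h1 hs
  exact le_antisymm (csInf_le ⟨1/2, hlb⟩ hmem) (le_csInf ⟨1/2, hmem⟩ hlb)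

end Stmt19
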